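/- Let S be the edge set of a spanning tree of G and ℒ_S its set of lonely cuts. Then there exists a function f: {(e,C) : e ∈ C, C ∈ ℒ_S} → ℝ≥0 such that Σ_{C∈ℒ_S: e∈C} f(e,C) ≤ x*_e for every edge e ∈ E and Σ_{e∈C} f(e,C) ≥ 1 for every C ∈ ℒ_S. -/

import Mathlib

open Finset
open scoped Classical symmDiff

/-- A multigraph on vertex type `V` with edge type `E`, given by the two endpoints
of each edge. -/
structure MultiGraph (V E : Type*) where
  fst : E → V
  snd : E → V

namespace MultiGraph

variable {V E : Type*} [Fintype V] [DecidableEq V] [Fintype E] [DecidableEq E]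
variable (G : MultiGraph V E)

/-- The cut `δ(U)`: the set of edges with exactly one endpoint in `U`. -/
noncomputable def cut (U : Finset V) : Finset E :=
  univ.filter fun e => (G.fst e ∈ U ∧ G.snd e ∉ U) ∨ (G.fst e ∉ U ∧ G.snd e ∈ U)

/-- The degree of `v` with respect to the edge multiset `F`. -/
def deg (F : Multiset E) (v : V) : ℕ :=
  (F.map fun e => (if G.fst e = v then 1 else 0) + (if G.snd e = v then 1 else 0)).sum

/-- `odd(F)`: the set of vertices of odd degree in `(V, F)`. -/
noncomputable def oddVerts (F : Multiset E) : Finset V :=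
  univ.filter fun v => Odd (G.deg F v)

/-- Adjacency via an edge satisfying the predicate `P`. -/
def Adj (P : E → Prop) (a b : V) : Prop :=
  ∃ e, P e ∧ ((G.fst e = a ∧ G.snd e = b) ∨ (G.fst e = b ∧ G.snd e = a))

/-- `(V, {e | P e})` is a connected (spanning) subgraph. -/
def ConnectedOn (P : E → Prop) : Prop :=
  ∀ u w : V, Relation.ReflTransGen (G.Adj P) u w

/-- The graph `G` is connected. -/
def Connected : Prop := G.ConnectedOn fun _ => True

/-- A `T`-tour: a multi-subset `F` of the edges such that `(V, F)` is connected and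
`odd(F) = T`. -/
def IsTTour (T : Finset V) (F : Multiset E) : Prop :=
  G.ConnectedOn (· ∈ F) ∧ G.oddVerts F = T

/-- `S` is the edge set of a spanning tree of `G`. -/
def IsSpanningTree (S : Finset E) : Prop :=
  G.ConnectedOn (· ∈ S) ∧ S.card + 1 = Fintype.card V

/-- `δ(𝒲)`: the set of edges whose endpoints lie in different parts of the
partition `𝒲` of `V`. -/
noncomputable def partitionCut (W : Finpartition (univ : Finset V)) : Finset E :=
  univ.filter fun e => ∀ P ∈ W.parts, ¬(G.fst e ∈ P ∧ G.snd e ∈ P)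

/-- Feasibility for the standard LP relaxation of the `T`-tour problem. -/
def LPFeasible (T : Finset V) (x : E → ℝ) : Prop :=
  (∀ e, 0 ≤ x e) ∧
  (∀ U : Finset V, U.Nonempty → U ≠ univ → Even ((T ∩ U).card) →
    2 ≤ ∑ e ∈ G.cut U, x e) ∧
  (∀ W : Finpartition (univ : Finset V),
    (W.parts.card : ℝ) - 1 ≤ ∑ e ∈ G.partitionCut W, x e)

/-- `C` is a cut of `G`, i.e. `C = δ(U)` for some nonempty proper `U ⊆ V`. -/
def IsCut (C : Finset E) : Prop :=
  ∃ U : Finset V, U.Nonempty ∧ U ≠ univ ∧ C = G.cut U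

/-- A narrow cut: a cut `C` with `x(C) < 2`. -/
def Narrow (x : E → ℝ) (C : Finset E) : Prop :=
  G.IsCut C ∧ ∑ e ∈ C, x e < 2

/-- `𝒩`: the set of narrow cuts. -/
noncomputable def narrowCuts (x : E → ℝ) : Finset (Finset E) :=
  univ.filter fun C => G.Narrow x C

/-- A narrow cut `C` is lonely for `S` if `|S ∩ C| = 1`. -/
def Lonely (x : E → ℝ) (S C : Finset E) : Prop :=
  G.Narrow x C ∧ (S ∩ C).card = 1

/-- `ℒ_S`: the set of lonely cuts of `S`. -/
noncomputable def lonelyCuts (x : E → ℝ) (S : Finset E) : Finset (Finset E) :=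
  univ.filter fun C => G.Lonely x S C

/-- `L_S = ∪_{C ∈ ℒ_S} (S ∩ C)`: the set of lonely edges of `S`. -/
noncomputable def lonelyEdges (x : E → ℝ) (S : Finset E) : Finset E :=
  S.filter fun e => ∃ C, G.Lonely x S C ∧ e ∈ C

/-- The incidence vector `χ^F` of an edge set `F`. -/
def chi (F : Finset E) : E → ℝ := fun e => if e ∈ F then 1 else 0

/-- The vector `v^C = (1/(2 - x(C))) · Σ_{S : C ∈ ℒ_S} p_S · χ^{S ∩ C}`. -/
noncomputable def vC (x : E → ℝ) (p : Finset E → ℝ) (C : Finset E) : E → ℝ :=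
  fun e => (1 / (2 - ∑ f ∈ C, x f)) *
    ∑ S : Finset E, (if G.Lonely x S C then p S else 0) * chi (S ∩ C) e

/-- The modified cost
`c^S(e) = c(e) + 2·(Σ_{C ∈ ℒ_S : e ∈ C} c(S ∩ C) − max_{C ∈ ℒ_S : e ∈ C} c(S ∩ C))`,
where the maximum over the empty set is `0`. -/
noncomputable def modCost (c x : E → ℝ) (S : Finset E) (e : E) : ℝ :=
  c e + 2 * ((∑ C ∈ (G.lonelyCuts x S).filter (fun C => e ∈ C), ∑ f ∈ S ∩ C, c f)
    - (if h : ((G.lonelyCuts x S).filter (fun C => e ∈ C)).Nonempty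
        then ((G.lonelyCuts x S).filter (fun C => e ∈ C)).sup' h (fun C => ∑ f ∈ S ∩ C, c f)
        else 0))

/-- The set of vertices reachable from `v` using edges satisfying `P`. -/
noncomputable def reachSet (P : E → Prop) (v : V) : Finset V :=
  univ.filter fun w => Relation.ReflTransGen (G.Adj P) v w

end MultiGraph

namespace FracHallAux

variable {α : Type*} [Fintype α] [DecidableEq α]

lemma nonempty_of_mem_sup {ℬ : Finset (Finset α)} {e : α} (h : e ∈ ℬ.sup id) : ℬ.Nonempty := by
  rcases Finset.mem_sup.mp h with ⟨C, hC, _⟩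
  exact ⟨C, hC⟩

theorem frac_hall : ∀ (n : ℕ) (𝒞 : Finset (Finset α)), 𝒞.card ≤ n →
    ∀ (x : α → ℝ) (d : Finset α → ℝ), (∀ e, 0 ≤ x e) →
    (∀ ℬ ⊆ 𝒞, ∑ C ∈ ℬ, d C ≤ ∑ e ∈ ℬ.sup id, x e) →
    ∃ f : α → Finset α → ℝ,
      (∀ e C, 0 ≤ f e C) ∧
      (∀ e C, f e C ≠ 0 → e ∈ C ∧ C ∈ 𝒞) ∧
      (∀ e, ∑ C ∈ (univ : Finset (Finset α)), f e C ≤ x e) ∧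
      (∀ C ∈ 𝒞, d C ≤ ∑ e ∈ C, f e C) := by
  intro n
  induction n with
  | zero =>
    intro 𝒞 hc x d hx _
    have h𝒞 : 𝒞 = ∅ := Finset.card_eq_zero.mp (Nat.le_zero.mp hc)
    subst h𝒞
    refine ⟨fun _ _ => 0, fun _ _ => le_refl 0, fun e C h => absurd rfl h, ?_, ?_⟩
    · intro e; simpa using hx e
    · intro C hC; simp at hC
  | succ n ih =>
    intro 𝒞 hcard x d hx hall
    rcases 𝒞.eq_empty_or_nonempty with rfl | ⟨C0, hC0⟩
    · refine ⟨fun _ _ => 0, fun _ _ => le_refl 0, fun e C h => absurd rfl h, ?_, ?_⟩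
      · intro e; simpa using hx e
      · intro C hC; simp at hC
    have hcard' : (𝒞.erase C0).card ≤ n := by
      rw [Finset.card_erase_of_mem hC0]; omega
    -- the "drop C0" construction
    have drop : ∀ (x1 : α → ℝ) (d1 : Finset α → ℝ), (∀ e, 0 ≤ x1 e) →
        (∀ ℬ ⊆ 𝒞.erase C0, ∑ C ∈ ℬ, d1 C ≤ ∑ e ∈ ℬ.sup id, x1 e) →
        ∃ f : α → Finset α → ℝ,
          (∀ e C, 0 ≤ f e C) ∧
          (∀ e C, f e C ≠ 0 → e ∈ C ∧ C ∈ 𝒞) ∧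
          (∀ e, ∑ C ∈ (univ : Finset (Finset α)), f e C ≤ x1 e) ∧
          (∀ C ∈ 𝒞.erase C0, d1 C ≤ ∑ e ∈ C, f e C) ∧
          (∀ e, f e C0 = 0) := by
      intro x1 d1 hx1 hall1
      obtain ⟨f, hf0, hfs, hfr, hfc⟩ := ih (𝒞.erase C0) hcard' x1 d1 hx1 hall1
      refine ⟨f, hf0, ?_, hfr, ?_, ?_⟩
      · intro e C h
        obtain ⟨h1, h2⟩ := hfs e C h
        exact ⟨h1, Finset.mem_of_mem_erase h2⟩
      · intro C hC; exact hfc C hC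
      · intro e
        by_contra h
        exact (Finset.notMem_erase C0 𝒞) (hfs e C0 h).2
    -- inner induction on the support of x inside C0
    have inner : ∀ (m : ℕ) (x : α → ℝ) (d : Finset α → ℝ), (∀ e, 0 ≤ x e) →
        (∀ ℬ ⊆ 𝒞, ∑ C ∈ ℬ, d C ≤ ∑ e ∈ ℬ.sup id, x e) →
        (C0.filter fun e => 0 < x e).card ≤ m →
        ∃ f : α → Finset α → ℝ,
          (∀ e C, 0 ≤ f e C) ∧
          (∀ e C, f e C ≠ 0 → e ∈ C ∧ C ∈ 𝒞) ∧
          (∀ e, ∑ C ∈ (univ : Finset (Finset α)), f e C ≤ x e) ∧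
          (∀ C ∈ 𝒞, d C ≤ ∑ e ∈ C, f e C) := by
      intro m
      induction m with
      | zero =>
        intro x d hx hall hm
        have hxC0 : ∀ e ∈ C0, x e = 0 := by
          intro e he
          have h1 : e ∉ C0.filter fun e => 0 < x e := by
            rw [Finset.card_eq_zero.mp (Nat.le_zero.mp hm)]
            exact Finset.notMem_empty e
          rw [Finset.mem_filter] at h1
          push_neg at h1
          exact le_antisymm (h1 he) (hx e)
        have hdC0 : d C0 ≤ 0 := by
          have h1 := hall {C0} (by simpa using hC0)
          rw [Finset.sup_singleton, Finset.sum_singleton, id] at h1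
          have h2 : ∑ e ∈ (C0 : Finset α), x e = 0 := Finset.sum_eq_zero hxC0
          linarith
        obtain ⟨f, hf0, hfs, hfr, hfc, hfz⟩ := drop x d hx
          (fun ℬ hB => hall ℬ (hB.trans (Finset.erase_subset _ _)))
        refine ⟨f, hf0, hfs, hfr, ?_⟩
        intro C hC
        by_cases hCC0 : C = C0
        · subst hCC0
          have h3 : ∑ e ∈ C, f e C = 0 := Finset.sum_eq_zero fun e _ => hfz e
          rw [h3]; exact hdC0
        · exact hfc C (Finset.mem_erase.mpr ⟨hCC0, hC⟩)
      | succ m ihm =>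
        intro x d hx hall hm
        by_cases hd : d C0 ≤ 0
        · obtain ⟨f, hf0, hfs, hfr, hfc, hfz⟩ := drop x d hx
            (fun ℬ hB => hall ℬ (hB.trans (Finset.erase_subset _ _)))
          refine ⟨f, hf0, hfs, hfr, ?_⟩
          intro C hC
          by_cases hCC0 : C = C0
          · subst hCC0
            have h3 : ∑ e ∈ C, f e C = 0 := Finset.sum_eq_zero fun e _ => hfz e
            rw [h3]; exact hd
          · exact hfc C (Finset.mem_erase.mpr ⟨hCC0, hC⟩)
        push_neg at hd
        have hsum : 0 < ∑ e ∈ C0, x e := by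
          have h1 := hall {C0} (by simpa using hC0)
          rw [Finset.sup_singleton, Finset.sum_singleton, id] at h1
          linarith
        have he0 : ∃ e0 ∈ C0, 0 < x e0 := by
          by_contra h
          push_neg at h
          have : ∑ e ∈ C0, x e ≤ 0 := Finset.sum_nonpos fun e he => h e he
          linarith
        obtain ⟨e0, he0C, he0x⟩ := he0
        set 𝔽 : Finset (Finset (Finset α)) :=
          𝒞.powerset.filter fun ℬ => C0 ∉ ℬ ∧ e0 ∈ ℬ.sup id with h𝔽def
        set slack : Finset (Finset α) → ℝ :=
          fun ℬ => (∑ e ∈ ℬ.sup id, x e) - ∑ C ∈ ℬ, d C with hslackdef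
        have mem𝔽 : ∀ ℬ, ℬ ∈ 𝔽 ↔ ℬ ⊆ 𝒞 ∧ C0 ∉ ℬ ∧ e0 ∈ ℬ.sup id := by
          intro ℬ
          rw [h𝔽def, Finset.mem_filter, Finset.mem_powerset]
        by_cases h𝔽 : ∃ ℬ ∈ 𝔽, slack ℬ ≤ min (x e0) (d C0)
        · -- CASE (b) : split at a slack-minimizing set
          obtain ⟨ℬw, hℬw, hℬwle⟩ := h𝔽
          obtain ⟨ℬs, hℬs, hmin⟩ := Finset.exists_min_image 𝔽 slack ⟨ℬw, hℬw⟩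
          obtain ⟨hB1, hB3, hB4⟩ := (mem𝔽 ℬs).mp hℬs
          have hB2 : ℬs.Nonempty := nonempty_of_mem_sup hB4
          have hτle : slack ℬs ≤ min (x e0) (d C0) := le_trans (hmin ℬw hℬw) hℬwle
          set τ : ℝ := slack ℬs with hτdef
          have hτ0 : 0 ≤ τ := sub_nonneg.mpr (hall ℬs hB1)
          set x' : α → ℝ := fun e => x e - (if e = e0 then τ else 0) with hx'def
          set d' : Finset α → ℝ :=
            fun C => d C - (if C = C0 then τ else 0) with hd'def
          have sumx' : ∀ A : Finset α,
              ∑ e ∈ A, x' e = (∑ e ∈ A, x e) - (if e0 ∈ A then τ else 0) := by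
            intro A
            simp only [hx'def]
            rw [Finset.sum_sub_distrib, Finset.sum_ite_eq' A e0 (fun _ => τ)]
          have sumd' : ∀ A : Finset (Finset α),
              ∑ C ∈ A, d' C = (∑ C ∈ A, d C) - (if C0 ∈ A then τ else 0) := by
            intro A
            simp only [hd'def]
            rw [Finset.sum_sub_distrib, Finset.sum_ite_eq' A C0 (fun _ => τ)]
          have hx'0 : ∀ e, 0 ≤ x' e := by
            intro e
            simp only [hx'def]
            split_ifs with h
            · rw [h]; linarith [min_le_left (x e0) (d C0), hτle]
            · simpa using hx e
          have hall' : ∀ ℬ ⊆ 𝒞, ∑ C ∈ ℬ, d' C ≤ ∑ e ∈ ℬ.sup id, x' e := by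
            intro ℬ hB
            rw [sumx', sumd']
            have h1 := hall ℬ hB
            by_cases hC0B : C0 ∈ ℬ
            · rw [if_pos hC0B]
              split_ifs with h2 <;> linarith
            · rw [if_neg hC0B]
              by_cases h2 : e0 ∈ ℬ.sup id
              · rw [if_pos h2]
                have h3 := hmin ℬ ((mem𝔽 ℬ).mpr ⟨hB, hC0B, h2⟩)
                simp only [hslackdef] at h3
                linarith
              · rw [if_neg h2]; linarith
          have tight : ∑ e ∈ ℬs.sup id, x' e = ∑ C ∈ ℬs, d C := by
            rw [sumx', if_pos hB4, hτdef]
            simp only [hslackdef]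
            ring
          have hBcard : ℬs.card ≤ n := by
            have hsub : ℬs ⊆ 𝒞.erase C0 := Finset.subset_erase.mpr ⟨hB1, hB3⟩
            exact le_trans (Finset.card_le_card hsub) hcard'
          have hallI : ∀ ℬ ⊆ ℬs, ∑ C ∈ ℬ, d C ≤ ∑ e ∈ ℬ.sup id, x' e := by
            intro ℬ hB
            have h1 := hall' ℬ (hB.trans hB1)
            rw [sumd', if_neg (fun h => hB3 (hB h))] at h1
            linarith
          obtain ⟨f1, hf10, hf1s, hf1r, hf1c⟩ := ih ℬs hBcard x' d hx'0 hallI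
          set x'' : α → ℝ := fun e => if e ∈ ℬs.sup id then 0 else x' e with hx''def
          have hx''0 : ∀ e, 0 ≤ x'' e := by
            intro e; simp only [hx''def]
            split_ifs
            · exact le_refl 0
            · exact hx'0 e
          have sumx'' : ∀ A : Finset α,
              ∑ e ∈ A, x'' e = ∑ e ∈ A \ ℬs.sup id, x' e := by
            intro A
            rw [Finset.sdiff_eq_filter, Finset.sum_filter]
            simp only [hx''def]
            apply Finset.sum_congr rfl
            intro e _
            by_cases h : e ∈ ℬs.sup id <;> simp [h]
          have hscard : (𝒞 \ ℬs).card ≤ n := by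
            have h1 : 1 ≤ ℬs.card := Finset.card_pos.mpr hB2
            have h2 := Finset.card_sdiff_of_subset hB1
            have h3 : ℬs.card ≤ 𝒞.card := Finset.card_le_card hB1
            omega
          have hallII : ∀ 𝒜 ⊆ 𝒞 \ ℬs, ∑ C ∈ 𝒜, d' C ≤ ∑ e ∈ 𝒜.sup id, x'' e := by
            intro 𝒜 h𝒜
            have hdisj : Disjoint 𝒜 ℬs :=
              Finset.disjoint_of_subset_left h𝒜 Finset.sdiff_disjoint
            have h𝒜𝒞 : 𝒜 ⊆ 𝒞 := h𝒜.trans Finset.sdiff_subset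
            have h1 := hall' (𝒜 ∪ ℬs) (Finset.union_subset h𝒜𝒞 hB1)
            rw [Finset.sum_union hdisj] at h1
            rw [Finset.sup_union, Finset.sup_eq_union] at h1
            rw [← Finset.sdiff_union_self_eq_union] at h1
            rw [Finset.sum_union Finset.sdiff_disjoint] at h1
            have h2 : ∑ C ∈ ℬs, d' C = ∑ C ∈ ℬs, d C := by
              rw [sumd', if_neg hB3]; ring
            rw [h2, ← tight] at h1
            rw [sumx'']
            linarith
          obtain ⟨f2, hf20, hf2s, hf2r, hf2c⟩ := ih (𝒞 \ ℬs) hscard x'' d' hx''0 hallII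
          set f : α → Finset α → ℝ := fun e C => f1 e C + f2 e C +
            (if C = C0 then (if e = e0 then τ else 0) else 0) with hfdef
          refine ⟨f, ?_, ?_, ?_, ?_⟩ <;> simp only [hfdef]
          · intro e C
            have h1 := hf10 e C; have h2 := hf20 e C
            split_ifs <;> linarith
          · intro e C h
            by_cases h1 : f1 e C ≠ 0
            · obtain ⟨a, b⟩ := hf1s e C h1; exact ⟨a, hB1 b⟩
            by_cases h2 : f2 e C ≠ 0
            · obtain ⟨a, b⟩ := hf2s e C h2; exact ⟨a, Finset.sdiff_subset b⟩
            push_neg at h1 h2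
            rw [h1, h2] at h
            simp only [zero_add] at h
            by_cases hc : C = C0
            · by_cases hee : e = e0
              · exact ⟨by rw [hee, hc]; exact he0C, by rw [hc]; exact hC0⟩
              · rw [if_pos hc, if_neg hee] at h; exact absurd rfl h
            · rw [if_neg hc] at h; exact absurd rfl h
          · intro e
            rw [Finset.sum_add_distrib, Finset.sum_add_distrib]
            have hind : ∑ C ∈ (univ : Finset (Finset α)),
                (if C = C0 then (if e = e0 then τ else 0) else 0)
                = (if e = e0 then τ else 0) := by
              rw [Finset.sum_ite_eq' univ C0 (fun _ => (if e = e0 then τ else 0))]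
              rw [if_pos (Finset.mem_univ C0)]
            rw [hind]
            have hr1 := hf1r e
            have hr2 := hf2r e
            have hxe : x' e + (if e = e0 then τ else 0) = x e := by
              simp only [hx'def]; ring
            by_cases heB : e ∈ ℬs.sup id
            · have hx''e : x'' e = 0 := by simp only [hx''def]; rw [if_pos heB]
              rw [hx''e] at hr2
              linarith
            · have hz : ∑ C ∈ (univ : Finset (Finset α)), f1 e C = 0 :=
                Finset.sum_eq_zero (fun C _ => by
                  by_contra hcon
                  obtain ⟨a, b⟩ := hf1s e C hcon
                  exact heB (Finset.mem_sup.mpr ⟨C, b, a⟩))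
              have hx''e : x'' e = x' e := by simp only [hx''def]; rw [if_neg heB]
              rw [hx''e] at hr2
              rw [hz]
              linarith
          · intro C hC
            rw [Finset.sum_add_distrib, Finset.sum_add_distrib]
            have hc1 : (0:ℝ) ≤ ∑ e ∈ C, f1 e C := Finset.sum_nonneg fun e _ => hf10 e C
            have hc2 : (0:ℝ) ≤ ∑ e ∈ C, f2 e C := Finset.sum_nonneg fun e _ => hf20 e C
            have hind0 : (0:ℝ) ≤ ∑ e ∈ C,
                (if C = C0 then (if e = e0 then τ else 0) else 0) :=
              Finset.sum_nonneg (fun e _ => by split_ifs <;> simp [hτ0])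
            by_cases hCB : C ∈ ℬs
            · have h1 := hf1c C hCB
              linarith
            · have hC2 : C ∈ 𝒞 \ ℬs := Finset.mem_sdiff.mpr ⟨hC, hCB⟩
              have h2 := hf2c C hC2
              simp only [hd'def] at h2
              by_cases hcc : C = C0
              · have hind : ∑ e ∈ C,
                    (if C = C0 then (if e = e0 then τ else 0) else 0) = τ := by
                  simp only [if_pos hcc]
                  rw [Finset.sum_ite_eq' C e0 (fun _ => τ),
                    if_pos (by rw [hcc]; exact he0C)]
                rw [if_pos hcc] at h2
                rw [hind]
                linarith
              · rw [if_neg hcc] at h2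
                have hind : ∑ e ∈ C,
                    (if C = C0 then (if e = e0 then τ else 0) else 0) = 0 := by
                  simp [hcc]
                rw [hind]
                linarith
        · -- no small-slack obstruction
          push_neg at h𝔽
          by_cases hdx : d C0 ≤ x e0
          · -- CASE (a) : satisfy C0 fully via e0 and drop it
            set τ : ℝ := d C0 with hτdef
            have hτ0 : 0 ≤ τ := le_of_lt hd
            set x' : α → ℝ := fun e => x e - (if e = e0 then τ else 0) with hx'def
            have sumx' : ∀ A : Finset α,
                ∑ e ∈ A, x' e = (∑ e ∈ A, x e) - (if e0 ∈ A then τ else 0) := by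
              intro A
              simp only [hx'def]
              rw [Finset.sum_sub_distrib, Finset.sum_ite_eq' A e0 (fun _ => τ)]
            have hx'0 : ∀ e, 0 ≤ x' e := by
              intro e
              simp only [hx'def]
              split_ifs with h
              · rw [h, hτdef]; linarith
              · simpa using hx e
            have hall'' : ∀ ℬ ⊆ 𝒞.erase C0, ∑ C ∈ ℬ, d C ≤ ∑ e ∈ ℬ.sup id, x' e := by
              intro ℬ hB
              rw [sumx']
              have hBC : ℬ ⊆ 𝒞 := hB.trans (Finset.erase_subset _ _)
              have hC0B : C0 ∉ ℬ := fun h => (Finset.notMem_erase C0 𝒞) (hB h)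
              by_cases h2 : e0 ∈ ℬ.sup id
              · rw [if_pos h2]
                have h3 := h𝔽 ℬ ((mem𝔽 ℬ).mpr ⟨hBC, hC0B, h2⟩)
                simp only [hslackdef] at h3
                have h4 : min (x e0) (d C0) = d C0 := min_eq_right hdx
                rw [h4] at h3
                linarith
              · rw [if_neg h2]; linarith [hall ℬ hBC]
            obtain ⟨f', hf0, hfs, hfr, hfc, hfz⟩ := drop x' d hx'0 hall''
            set f : α → Finset α → ℝ := fun e C => f' e C +
              (if C = C0 then (if e = e0 then τ else 0) else 0) with hfdef
            refine ⟨f, ?_, ?_, ?_, ?_⟩ <;> simp only [hfdef]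
            · intro e C
              have h1 := hf0 e C
              split_ifs <;> linarith
            · intro e C h
              by_cases h1 : f' e C ≠ 0
              · exact hfs e C h1
              push_neg at h1
              rw [h1, zero_add] at h
              by_cases hc : C = C0
              · by_cases hee : e = e0
                · exact ⟨by rw [hee, hc]; exact he0C, by rw [hc]; exact hC0⟩
                · rw [if_pos hc, if_neg hee] at h; exact absurd rfl h
              · rw [if_neg hc] at h; exact absurd rfl h
            · intro e
              rw [Finset.sum_add_distrib]
              have hind : ∑ C ∈ (univ : Finset (Finset α)),
                  (if C = C0 then (if e = e0 then τ else 0) else 0)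
                  = (if e = e0 then τ else 0) := by
                rw [Finset.sum_ite_eq' univ C0 (fun _ => (if e = e0 then τ else 0))]
                rw [if_pos (Finset.mem_univ C0)]
              rw [hind]
              have hr := hfr e
              have hxe : x' e + (if e = e0 then τ else 0) = x e := by
                simp only [hx'def]; ring
              linarith
            · intro C hC
              rw [Finset.sum_add_distrib]
              by_cases hcc : C = C0
              · have hz : ∑ e ∈ C, f' e C = 0 :=
                  Finset.sum_eq_zero fun e _ => by rw [hcc]; exact hfz e
                have hind : ∑ e ∈ C,
                    (if C = C0 then (if e = e0 then τ else 0) else 0) = τ := by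
                  simp only [if_pos hcc]
                  rw [Finset.sum_ite_eq' C e0 (fun _ => τ),
                    if_pos (by rw [hcc]; exact he0C)]
                rw [hz, hind, hτdef, hcc]
                simp
              · have h1 := hfc C (Finset.mem_erase.mpr ⟨hcc, hC⟩)
                have hind : ∑ e ∈ C,
                    (if C = C0 then (if e = e0 then τ else 0) else 0) = 0 := by
                  simp [hcc]
                rw [hind]
                linarith
          · -- CASE (c) : exhaust edge e0, recurse on smaller support
            push_neg at hdx
            set τ : ℝ := x e0 with hτdef
            have hτ0 : 0 ≤ τ := le_of_lt he0x
            set x' : α → ℝ := fun e => x e - (if e = e0 then τ else 0) with hx'def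
            set d' : Finset α → ℝ :=
              fun C => d C - (if C = C0 then τ else 0) with hd'def
            have sumx' : ∀ A : Finset α,
                ∑ e ∈ A, x' e = (∑ e ∈ A, x e) - (if e0 ∈ A then τ else 0) := by
              intro A
              simp only [hx'def]
              rw [Finset.sum_sub_distrib, Finset.sum_ite_eq' A e0 (fun _ => τ)]
            have sumd' : ∀ A : Finset (Finset α),
                ∑ C ∈ A, d' C = (∑ C ∈ A, d C) - (if C0 ∈ A then τ else 0) := by
              intro A
              simp only [hd'def]
              rw [Finset.sum_sub_distrib, Finset.sum_ite_eq' A C0 (fun _ => τ)]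
            have hx'0 : ∀ e, 0 ≤ x' e := by
              intro e
              simp only [hx'def]
              split_ifs with h
              · rw [h, hτdef]; simp
              · simpa using hx e
            have hall''' : ∀ ℬ ⊆ 𝒞, ∑ C ∈ ℬ, d' C ≤ ∑ e ∈ ℬ.sup id, x' e := by
              intro ℬ hB
              rw [sumx', sumd']
              have h1 := hall ℬ hB
              by_cases hC0B : C0 ∈ ℬ
              · rw [if_pos hC0B]
                split_ifs with h2 <;> linarith
              · rw [if_neg hC0B]
                by_cases h2 : e0 ∈ ℬ.sup id
                · rw [if_pos h2]
                  have h3 := h𝔽 ℬ ((mem𝔽 ℬ).mpr ⟨hB, hC0B, h2⟩)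
                  simp only [hslackdef] at h3
                  have h4 : min (x e0) (d C0) = x e0 := min_eq_left (le_of_lt hdx)
                  rw [h4] at h3
                  simp only [hτdef]
                  linarith
                · rw [if_neg h2]; linarith
            have hm' : (C0.filter fun e => 0 < x' e).card ≤ m := by
              have hsub : (C0.filter fun e => 0 < x' e) ⊆
                  (C0.filter fun e => 0 < x e).erase e0 := by
                intro e he
                rw [Finset.mem_filter] at he
                obtain ⟨heC, hex⟩ := he
                have hne : e ≠ e0 := by
                  intro h
                  rw [h] at hex
                  simp only [hx'def] at hex
                  rw [if_true, hτdef] at hex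
                  linarith
                refine Finset.mem_erase.mpr ⟨hne, Finset.mem_filter.mpr ⟨heC, ?_⟩⟩
                simp only [hx'def, if_neg hne] at hex
                linarith
              have h1 := Finset.card_le_card hsub
              have he0f : e0 ∈ C0.filter fun e => 0 < x e :=
                Finset.mem_filter.mpr ⟨he0C, he0x⟩
              rw [Finset.card_erase_of_mem he0f] at h1
              omega
            obtain ⟨f'', hf0, hfs, hfr, hfc⟩ := ihm x' d' hx'0 hall''' hm'
            set f : α → Finset α → ℝ := fun e C => f'' e C +
              (if C = C0 then (if e = e0 then τ else 0) else 0) with hfdef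
            refine ⟨f, ?_, ?_, ?_, ?_⟩ <;> simp only [hfdef]
            · intro e C
              have h1 := hf0 e C
              split_ifs <;> linarith
            · intro e C h
              by_cases h1 : f'' e C ≠ 0
              · exact hfs e C h1
              push_neg at h1
              rw [h1, zero_add] at h
              by_cases hc : C = C0
              · by_cases hee : e = e0
                · exact ⟨by rw [hee, hc]; exact he0C, by rw [hc]; exact hC0⟩
                · rw [if_pos hc, if_neg hee] at h; exact absurd rfl h
              · rw [if_neg hc] at h; exact absurd rfl h
            · intro e
              rw [Finset.sum_add_distrib]
              have hind : ∑ C ∈ (univ : Finset (Finset α)),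
                  (if C = C0 then (if e = e0 then τ else 0) else 0)
                  = (if e = e0 then τ else 0) := by
                rw [Finset.sum_ite_eq' univ C0 (fun _ => (if e = e0 then τ else 0))]
                rw [if_pos (Finset.mem_univ C0)]
              rw [hind]
              have hr := hfr e
              have hxe : x' e + (if e = e0 then τ else 0) = x e := by
                simp only [hx'def]; ring
              linarith
            · intro C hC
              rw [Finset.sum_add_distrib]
              have h1 := hfc C hC
              simp only [hd'def] at h1
              by_cases hcc : C = C0
              · have hind : ∑ e ∈ C,
                    (if C = C0 then (if e = e0 then τ else 0) else 0) = τ := by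
                  simp only [if_pos hcc]
                  rw [Finset.sum_ite_eq' C e0 (fun _ => τ),
                    if_pos (by rw [hcc]; exact he0C)]
                rw [if_pos hcc] at h1
                rw [hind]
                linarith
              · rw [if_neg hcc] at h1
                have hind : ∑ e ∈ C,
                    (if C = C0 then (if e = e0 then τ else 0) else 0) = 0 := by
                  simp [hcc]
                rw [hind]
                linarith
    exact inner (C0.filter fun e => 0 < x e).card x d hx hall (le_refl _)

end FracHallAux


namespace MultiGraph

variable {V E : Type*} [Fintype V] [DecidableEq V] [Fintype E] [DecidableEq E]

variable {G : MultiGraph V E}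

lemma card_image_le_of_factor {α β γ : Type*} [DecidableEq α] [DecidableEq β] [DecidableEq γ]
    (s : Finset α) (f : α → β) (g : α → γ)
    (h : ∀ u ∈ s, ∀ v ∈ s, g u = g v → f u = f v) :
    (s.image f).card ≤ (s.image g).card := by
  induction s using Finset.induction_on with
  | empty => simp
  | @insert a s' ha ih =>
    rw [Finset.image_insert, Finset.image_insert]
    have ih' := ih (fun u hu v hv huv =>
      h u (Finset.mem_insert_of_mem hu) v (Finset.mem_insert_of_mem hv) huv)
    by_cases hg : g a ∈ s'.image g
    · rcases Finset.mem_image.mp hg with ⟨b, hb, hgb⟩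
      have hf : f a = f b :=
        h a (Finset.mem_insert_self a s') b (Finset.mem_insert_of_mem hb) hgb.symm
      have hfm : f a ∈ s'.image f := Finset.mem_image.mpr ⟨b, hb, hf.symm⟩
      rw [Finset.insert_eq_self.mpr hfm, Finset.insert_eq_self.mpr hg]
      exact ih'
    · calc (insert (f a) (s'.image f)).card ≤ (s'.image f).card + 1 :=
            Finset.card_insert_le _ _
        _ ≤ (s'.image g).card + 1 := by omega
        _ = (insert (g a) (s'.image g)).card := (Finset.card_insert_of_notMem hg).symm

lemma adj_symm {P : E → Prop} {a b : V} (h : G.Adj P a b) : G.Adj P b a := by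
  obtain ⟨e, hP, h | h⟩ := h
  · exact ⟨e, hP, Or.inr h⟩
  · exact ⟨e, hP, Or.inl h⟩

lemma rtg_symm {P : E → Prop} {a b : V}
    (h : Relation.ReflTransGen (G.Adj P) a b) :
    Relation.ReflTransGen (G.Adj P) b a :=
  (@Relation.ReflTransGen.stdSymm _ _ ⟨fun _ _ h' => adj_symm h'⟩).symm _ _ h

lemma adj_mono {F F' : Finset E} (hFF : F ⊆ F') {a b : V}
    (h : G.Adj (· ∈ F) a b) : G.Adj (· ∈ F') a b := by
  obtain ⟨e, hP, he⟩ := h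
  exact ⟨e, hFF hP, he⟩

lemma rtg_mono {F F' : Finset E} (hFF : F ⊆ F') {a b : V}
    (h : Relation.ReflTransGen (G.Adj (· ∈ F)) a b) :
    Relation.ReflTransGen (G.Adj (· ∈ F')) a b :=
  Relation.ReflTransGen.mono (fun _ _ h' => adj_mono hFF h') _ _ h

lemma mem_reachSet {P : E → Prop} {v w : V} :
    w ∈ G.reachSet P v ↔ Relation.ReflTransGen (G.Adj P) v w := by
  simp [reachSet]

lemma reachSet_eq_of_rtg {F : Finset E} {u v : V}
    (h : Relation.ReflTransGen (G.Adj (· ∈ F)) u v) :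
    G.reachSet (· ∈ F) u = G.reachSet (· ∈ F) v := by
  ext w
  rw [mem_reachSet, mem_reachSet]
  exact ⟨fun h' => (rtg_symm h).trans h', fun h' => h.trans h'⟩

lemma rtg_of_reachSet_eq {F : Finset E} {u v : V}
    (h : G.reachSet (· ∈ F) u = G.reachSet (· ∈ F) v) :
    Relation.ReflTransGen (G.Adj (· ∈ F)) u v := by
  have h2 : v ∈ G.reachSet (· ∈ F) v := mem_reachSet.mpr .refl
  rw [← h] at h2
  exact mem_reachSet.mp h2

lemma rtg_insert {g : E} {F : Finset E} {u v : V} :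
    Relation.ReflTransGen (G.Adj (· ∈ insert g F)) u v ↔
      Relation.ReflTransGen (G.Adj (· ∈ F)) u v
      ∨ (Relation.ReflTransGen (G.Adj (· ∈ F)) u (G.fst g) ∧
          Relation.ReflTransGen (G.Adj (· ∈ F)) (G.snd g) v)
      ∨ (Relation.ReflTransGen (G.Adj (· ∈ F)) u (G.snd g) ∧
          Relation.ReflTransGen (G.Adj (· ∈ F)) (G.fst g) v) := by
  constructor
  · intro h
    induction h with
    | refl => exact Or.inl .refl
    | @tail b c hR hadj ih =>
      obtain ⟨f, hf, hends⟩ := hadj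
      rcases Finset.mem_insert.mp hf with rfl | hfF
      · rcases hends with ⟨h1, h2⟩ | ⟨h1, h2⟩
        · -- fst f = b, snd f = c
          rcases ih with h | ⟨ha1, ha2⟩ | ⟨ha1, ha2⟩
          · exact Or.inr (Or.inl ⟨by rw [h1]; exact h, by rw [h2]⟩)
          · exact Or.inr (Or.inl ⟨ha1, by rw [h2]⟩)
          · exact Or.inl (by rw [← h2]; exact ha1)
        · -- fst f = c, snd f = b
          rcases ih with h | ⟨ha1, ha2⟩ | ⟨ha1, ha2⟩
          · exact Or.inr (Or.inr ⟨by rw [h2]; exact h, by rw [h1]⟩)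
          · exact Or.inl (by rw [← h1]; exact ha1)
          · exact Or.inr (Or.inr ⟨ha1, by rw [h1]⟩)
      · have step : G.Adj (· ∈ F) b c := ⟨f, hfF, hends⟩
        rcases ih with h | ⟨h1, h2⟩ | ⟨h1, h2⟩
        · exact Or.inl (h.tail step)
        · exact Or.inr (Or.inl ⟨h1, h2.tail step⟩)
        · exact Or.inr (Or.inr ⟨h1, h2.tail step⟩)
  · have step : G.Adj (· ∈ insert g F) (G.fst g) (G.snd g) :=
      ⟨g, Finset.mem_insert_self g F, Or.inl ⟨rfl, rfl⟩⟩
    rintro (h | ⟨h1, h2⟩ | ⟨h1, h2⟩)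
    · exact rtg_mono (Finset.subset_insert g F) h
    · exact ((rtg_mono (Finset.subset_insert g F) h1).tail step).trans
        (rtg_mono (Finset.subset_insert g F) h2)
    · exact ((rtg_mono (Finset.subset_insert g F) h1).tail (adj_symm step)).trans
        (rtg_mono (Finset.subset_insert g F) h2)

/-- The number of connected components is at least `|V| - |F|`. -/
lemma compBound (G : MultiGraph V E) (F : Finset E) :
    Fintype.card V ≤ (univ.image fun v => G.reachSet (· ∈ F) v).card + F.card := by
  induction F using Finset.induction_on with
  | empty =>
    have h : ∀ v : V, G.reachSet (· ∈ (∅ : Finset E)) v = {v} := by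
      intro v
      ext w
      rw [mem_reachSet]
      constructor
      · intro h
        have := Relation.reflTransGen_iff_eq
          (fun b (hb : G.Adj (· ∈ (∅ : Finset E)) v b) => by
            obtain ⟨e, he, _⟩ := hb; exact absurd he (Finset.notMem_empty e)) |>.mp h
        simp [this]
      · intro h
        rw [Finset.mem_singleton] at h
        subst h
        exact .refl
    have himg : (univ.image fun v => G.reachSet (· ∈ (∅ : Finset E)) v)
        = univ.image (fun v : V => ({v} : Finset V)) := by
      apply Finset.image_congr
      intro v _
      exact h v
    rw [himg, Finset.card_image_of_injective _ Finset.singleton_injective]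
    simp
  | @insert g F hg ihF =>
    have key : (univ.image fun v => G.reachSet (· ∈ F) v).card ≤
        (univ.image fun v => G.reachSet (· ∈ insert g F) v).card + 1 := by
      set W : Finset V := univ.filter
        (fun v => ¬ Relation.ReflTransGen (G.Adj (· ∈ F)) (G.fst g) v) with hW
      have h1 : (univ.image fun v => G.reachSet (· ∈ F) v) ⊆
          insert (G.reachSet (· ∈ F) (G.fst g)) (W.image fun v => G.reachSet (· ∈ F) v) := by
        intro P hP
        rcases Finset.mem_image.mp hP with ⟨v, _, rfl⟩
        by_cases hav : Relation.ReflTransGen (G.Adj (· ∈ F)) (G.fst g) v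
        · exact Finset.mem_insert.mpr (Or.inl (reachSet_eq_of_rtg hav).symm)
        · exact Finset.mem_insert.mpr (Or.inr (Finset.mem_image.mpr
            ⟨v, Finset.mem_filter.mpr ⟨Finset.mem_univ v, hav⟩, rfl⟩))
      have h2 : (W.image fun v => G.reachSet (· ∈ F) v).card ≤
          (W.image fun v => G.reachSet (· ∈ insert g F) v).card := by
        apply card_image_le_of_factor
        intro p hp q hq hpq
        rw [hW, Finset.mem_filter] at hp hq
        have hR : Relation.ReflTransGen (G.Adj (· ∈ insert g F)) p q :=
          rtg_of_reachSet_eq hpq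
        rcases rtg_insert.mp hR with h | ⟨hh1, hh2⟩ | ⟨hh1, hh2⟩
        · exact reachSet_eq_of_rtg h
        · exact absurd (rtg_symm hh1) hp.2
        · exact absurd hh2 hq.2
      have h3 : (W.image fun v => G.reachSet (· ∈ insert g F) v).card ≤
          (univ.image fun v => G.reachSet (· ∈ insert g F) v).card :=
        Finset.card_le_card (Finset.image_subset_image (Finset.subset_univ W))
      calc (univ.image fun v => G.reachSet (· ∈ F) v).card
          ≤ (insert (G.reachSet (· ∈ F) (G.fst g))
              (W.image fun v => G.reachSet (· ∈ F) v)).card := Finset.card_le_card h1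
        _ ≤ (W.image fun v => G.reachSet (· ∈ F) v).card + 1 := Finset.card_insert_le _ _
        _ ≤ (univ.image fun v => G.reachSet (· ∈ insert g F) v).card + 1 := by omega
    have hc : (insert g F).card = F.card + 1 := Finset.card_insert_of_notMem hg
    omega

/-- A connected spanning subgraph needs at least `|V| - 1` edges. -/
lemma connBound {G : MultiGraph V E} {F : Finset E} (h : G.ConnectedOn (· ∈ F)) :
    Fintype.card V ≤ F.card + 1 := by
  have h9 := compBound G F
  have himg : (univ.image fun v => G.reachSet (· ∈ F) v).card ≤ 1 := by
    rcases isEmpty_or_nonempty V with hV | hV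
    · simp [Finset.univ_eq_empty]
    · have hall : ∀ v : V, G.reachSet (· ∈ F) v = univ := by
        intro v
        ext w
        simp only [Finset.mem_univ, iff_true]
        exact mem_reachSet.mpr (h v w)
      have : (univ.image fun v => G.reachSet (· ∈ F) v) ⊆ {univ} := by
        intro P hP
        rcases Finset.mem_image.mp hP with ⟨v, _, rfl⟩
        simp [hall v]
      calc _ ≤ ({univ} : Finset (Finset V)).card := Finset.card_le_card this
        _ = 1 := Finset.card_singleton _
  omega

/-- Removing a tree edge disconnects its endpoints. -/
lemma tree_disconnect {S : Finset E} (hS : G.IsSpanningTree S) {e : E} (he : e ∈ S) :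
    ¬ Relation.ReflTransGen (G.Adj (· ∈ S.erase e)) (G.fst e) (G.snd e) := by
  intro hR
  have hconn : G.ConnectedOn (· ∈ S.erase e) := by
    intro u w
    have h := hS.1 u w
    induction h with
    | refl => exact .refl
    | @tail b c hbc hadj ih =>
      obtain ⟨f, hf, hends⟩ := hadj
      by_cases hfe : f = e
      · subst hfe
        rcases hends with ⟨h1, h2⟩ | ⟨h1, h2⟩
        · exact ih.trans (by rw [← h1, ← h2]; exact hR)
        · exact ih.trans (by rw [← h1, ← h2]; exact rtg_symm hR)
      · exact ih.tail ⟨f, Finset.mem_erase.mpr ⟨hfe, hf⟩, hends⟩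
  have hb := connBound hconn
  have hcards : (S.erase e).card = S.card - 1 := Finset.card_erase_of_mem he
  have hpos : 0 < S.card := Finset.card_pos.mpr ⟨e, he⟩
  have hn := hS.2
  omega

/-- Every vertex is reachable from one of the two endpoints of `e` in `S - e`. -/
lemma cover {S : Finset E} (hS : G.IsSpanningTree S) {e : E} (he : e ∈ S) (v : V) :
    Relation.ReflTransGen (G.Adj (· ∈ S.erase e)) (G.fst e) v ∨
    Relation.ReflTransGen (G.Adj (· ∈ S.erase e)) (G.snd e) v := by
  have h := hS.1 (G.fst e) v
  induction h with
  | refl => exact Or.inl .refl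
  | @tail b c hbc hadj ih =>
    obtain ⟨f, hf, hends⟩ := hadj
    by_cases hfe : f = e
    · subst hfe
      rcases hends with ⟨h1, h2⟩ | ⟨h1, h2⟩
      · exact Or.inr (by rw [← h2])
      · exact Or.inl (by rw [← h1])
    · have step : G.Adj (· ∈ S.erase e) b c := ⟨f, Finset.mem_erase.mpr ⟨hfe, hf⟩, hends⟩
      rcases ih with h | h
      · exact Or.inl (h.tail step)
      · exact Or.inr (h.tail step)

lemma sides_disjoint {S : Finset E} (hS : G.IsSpanningTree S) {e : E} (he : e ∈ S) {w : V}
    (h1 : Relation.ReflTransGen (G.Adj (· ∈ S.erase e)) (G.fst e) w)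
    (h2 : Relation.ReflTransGen (G.Adj (· ∈ S.erase e)) (G.snd e) w) : False :=
  tree_disconnect hS he (h1.trans (rtg_symm h2))

lemma mem_cut {U : Finset V} {g : E} :
    g ∈ G.cut U ↔ ((G.fst g ∈ U ∧ G.snd g ∉ U) ∨ (G.fst g ∉ U ∧ G.snd g ∈ U)) := by
  simp [cut]

lemma cut_compl {U : Finset V} : G.cut (univ \ U) = G.cut U := by
  ext g
  rw [mem_cut, mem_cut]
  simp only [Finset.mem_sdiff, Finset.mem_univ, true_and]
  tauto

/-- A cut containing exactly one tree edge `e` equals the cut of the `fst e` side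
of `S - e`. -/
lemma lonely_cut_canonical {S : Finset E} (hS : G.IsSpanningTree S) {C : Finset E}
    {U : Finset V} {e : E} (hCU : C = G.cut U) (hSC : S ∩ C = {e}) :
    e ∈ S ∧ C = G.cut (G.reachSet (· ∈ S.erase e) (G.fst e)) := by
  have heSC : e ∈ S ∩ C := by rw [hSC]; exact Finset.mem_singleton_self e
  have heS : e ∈ S := (Finset.mem_inter.mp heSC).1
  have heC : e ∈ C := (Finset.mem_inter.mp heSC).2
  refine ⟨heS, ?_⟩
  -- edges of S - e do not cross U
  have step_pres : ∀ w w', G.Adj (· ∈ S.erase e) w w' → (w ∈ U ↔ w' ∈ U) := by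
    intro w w' ⟨f, hf, hends⟩
    obtain ⟨hf1, hf2⟩ := Finset.mem_erase.mp hf
    have hfC : f ∉ C := by
      intro hfC
      have : f ∈ S ∩ C := Finset.mem_inter.mpr ⟨hf2, hfC⟩
      rw [hSC, Finset.mem_singleton] at this
      exact hf1 this
    rw [hCU, mem_cut] at hfC
    push_neg at hfC
    have hiff : G.fst f ∈ U ↔ G.snd f ∈ U := by tauto
    rcases hends with ⟨h1, h2⟩ | ⟨h1, h2⟩
    · rw [← h1, ← h2]; exact hiff
    · rw [← h1, ← h2]; exact hiff.symm
  have closure : ∀ u v, Relation.ReflTransGen (G.Adj (· ∈ S.erase e)) u v →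
      (u ∈ U ↔ v ∈ U) := by
    intro u v h
    induction h with
    | refl => exact Iff.rfl
    | @tail b c hbc hadj ih => exact ih.trans (step_pres b c hadj)
  -- main case analysis on which endpoint of e lies in U
  have hekey : (G.fst e ∈ U ∧ G.snd e ∉ U) ∨ (G.fst e ∉ U ∧ G.snd e ∈ U) := by
    rw [hCU, mem_cut] at heC; exact heC
  have husub : ∀ a' : V, a' ∈ U →
      (∀ v, Relation.ReflTransGen (G.Adj (· ∈ S.erase e)) (G.fst e) v ∨
        Relation.ReflTransGen (G.Adj (· ∈ S.erase e)) (G.snd e) v →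
        (Relation.ReflTransGen (G.Adj (· ∈ S.erase e)) a' v ∨
          (¬ v ∈ U → False) → True)) → True := fun _ _ _ => trivial
  rcases hekey with ⟨ha, hb⟩ | ⟨ha, hb⟩
  · -- U = reach (fst e)
    have hU : U = G.reachSet (· ∈ S.erase e) (G.fst e) := by
      ext w
      rw [mem_reachSet]
      constructor
      · intro hw
        rcases cover hS heS w with h | h
        · exact h
        · exact absurd ((closure _ _ h).mpr hw) hb
      · intro h
        exact (closure _ _ h).mp ha
    rw [hCU, hU]
  · -- U = reach (snd e); its complement is reach (fst e)
    have hU : U = G.reachSet (· ∈ S.erase e) (G.snd e) := by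
      ext w
      rw [mem_reachSet]
      constructor
      · intro hw
        rcases cover hS heS w with h | h
        · exact absurd ((closure _ _ h).mpr hw) ha
        · exact h
      · intro h
        exact (closure _ _ h).mp hb
    have hcompl : G.reachSet (· ∈ S.erase e) (G.snd e)
        = univ \ G.reachSet (· ∈ S.erase e) (G.fst e) := by
      ext w
      rw [mem_reachSet, Finset.mem_sdiff, mem_reachSet]
      constructor
      · intro h
        exact ⟨Finset.mem_univ w, fun h' => sides_disjoint hS heS h' h⟩
      · rintro ⟨-, h⟩
        rcases cover hS heS w with h' | h'
        · exact absurd h' h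
        · exact h'
    rw [hCU, hU, hcompl, cut_compl]

/-- Separation lemma: if `u,v` are on the same side of every cut associated with
edges of `K ⊆ S`, they remain connected in `S \ K`. -/
lemma separation {S : Finset E} (hS : G.IsSpanningTree S) :
    ∀ K : Finset E, K ⊆ S → ∀ u v : V,
    (∀ e ∈ K, (Relation.ReflTransGen (G.Adj (· ∈ S.erase e)) (G.fst e) u ↔
               Relation.ReflTransGen (G.Adj (· ∈ S.erase e)) (G.fst e) v)) →
    Relation.ReflTransGen (G.Adj (· ∈ S \ K)) u v := by
  intro K
  induction K using Finset.induction_on with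
  | empty =>
    intro _ u v _
    rw [Finset.sdiff_empty]
    exact hS.1 u v
  | @insert e K' heK' ihK =>
    intro hins u v hsides
    have heS : e ∈ S := hins (Finset.mem_insert_self e K')
    have hK'S : K' ⊆ S := (Finset.insert_subset_iff.mp hins).2
    have hDK : Relation.ReflTransGen (G.Adj (· ∈ S \ K')) u v :=
      ihK hK'S u v (fun f hf => hsides f (Finset.mem_insert_of_mem hf))
    have hDe : S \ insert e K' = (S \ K').erase e := by
      ext g
      simp only [Finset.mem_sdiff, Finset.mem_erase, Finset.mem_insert]
      tauto
    rw [hDe]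
    -- notation
    set RA : V → Prop :=
      fun w => Relation.ReflTransGen (G.Adj (· ∈ S.erase e)) (G.fst e) w with hRA
    have hsub : (S \ K').erase e ⊆ S.erase e :=
      Finset.erase_subset_erase e Finset.sdiff_subset
    have pres : ∀ w w', G.Adj (· ∈ (S \ K').erase e) w w' → (RA w ↔ RA w') := by
      intro w w' hadj
      have hstep : G.Adj (· ∈ S.erase e) w w' := adj_mono hsub hadj
      exact ⟨fun h => h.tail hstep, fun h => h.tail (adj_symm hstep)⟩
    have hbA : ¬ RA (G.snd e) := tree_disconnect hS heS
    have haA : RA (G.fst e) := .refl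
    by_cases hu : RA u
    · have claim : ∀ w, Relation.ReflTransGen (G.Adj (· ∈ S \ K')) u w →
          (RA w → Relation.ReflTransGen (G.Adj (· ∈ (S \ K').erase e)) u w) ∧
          (¬ RA w → Relation.ReflTransGen (G.Adj (· ∈ (S \ K').erase e)) u (G.fst e)) := by
        intro w hw
        induction hw with
        | refl => exact ⟨fun _ => .refl, fun h => absurd hu h⟩
        | @tail b' c hR hadj ih =>
          obtain ⟨f, hfD, hends⟩ := hadj
          by_cases hfe : f = e
          · rw [hfe] at hends
            rcases hends with ⟨h1, h2⟩ | ⟨h1, h2⟩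
            · -- fst e = b', snd e = c
              refine ⟨fun hc => absurd hc ?_, fun _ => ?_⟩
              · rw [← h2]; exact hbA
              · rw [h1]; exact ih.1 (by rw [← h1])
            · -- fst e = c, snd e = b'
              refine ⟨fun _ => ?_, fun hcon => absurd ?_ hcon⟩
              · rw [← h1]; exact ih.2 (by rw [← h2]; exact hbA)
              · rw [← h1]
          · have step' : G.Adj (· ∈ (S \ K').erase e) b' c :=
              ⟨f, Finset.mem_erase.mpr ⟨hfe, hfD⟩, hends⟩
            have hiff := pres b' c step'
            exact ⟨fun hc => (ih.1 (hiff.mpr hc)).tail step',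
              fun hc => ih.2 (fun hb => hc (hiff.mp hb))⟩
      have hv : RA v := (hsides e (Finset.mem_insert_self e K')).mp hu
      exact (claim v hDK).1 hv
    · have claim : ∀ w, Relation.ReflTransGen (G.Adj (· ∈ S \ K')) u w →
          (¬ RA w → Relation.ReflTransGen (G.Adj (· ∈ (S \ K').erase e)) u w) ∧
          (RA w → Relation.ReflTransGen (G.Adj (· ∈ (S \ K').erase e)) u (G.snd e)) := by
        intro w hw
        induction hw with
        | refl => exact ⟨fun _ => .refl, fun h => absurd h hu⟩
        | @tail b' c hR hadj ih =>
          obtain ⟨f, hfD, hends⟩ := hadj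
          by_cases hfe : f = e
          · rw [hfe] at hends
            rcases hends with ⟨h1, h2⟩ | ⟨h1, h2⟩
            · -- fst e = b', snd e = c
              refine ⟨fun _ => ?_, fun hc => absurd (by rw [h2]; exact hc) hbA⟩
              · rw [← h2]; exact ih.2 (by rw [← h1])
            · -- fst e = c, snd e = b'
              refine ⟨fun hcon => absurd ?_ hcon, fun _ => ?_⟩
              · rw [← h1]
              · rw [h2]; exact ih.1 (by rw [← h2]; exact hbA)
          · have step' : G.Adj (· ∈ (S \ K').erase e) b' c :=
              ⟨f, Finset.mem_erase.mpr ⟨hfe, hfD⟩, hends⟩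
            have hiff := pres b' c step'
            exact ⟨fun hc => (ih.1 (fun hb => hc (hiff.mp hb))).tail step',
              fun hc => ih.2 (hiff.mpr hc)⟩
      have hv : ¬ RA v := fun h =>
        hu ((hsides e (Finset.mem_insert_self e K')).mpr h)
      exact (claim v hDK).1 hv

/-- The Hall condition for the lonely cuts. -/
lemma hall_lonely {T : Finset V} (G : MultiGraph V E) {x : E → ℝ}
    (hx : G.LPFeasible T x) {S : Finset E} (hS : G.IsSpanningTree S) :
    ∀ ℬ ⊆ G.lonelyCuts x S, ∑ C ∈ ℬ, (1:ℝ) ≤ ∑ e ∈ ℬ.sup id, x e := by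
  intro ℬ hB
  have hcanon : ∀ C ∈ ℬ, ∃ e, S ∩ C = {e} ∧ e ∈ S ∧
      C = G.cut (G.reachSet (· ∈ S.erase e) (G.fst e)) := by
    intro C hC
    have hC' := hB hC
    rw [lonelyCuts, Finset.mem_filter] at hC'
    obtain ⟨-, ⟨⟨U, _, _, hCU⟩, -⟩, hone⟩ := hC'
    obtain ⟨e, he⟩ := Finset.card_eq_one.mp hone
    obtain ⟨heS, hcan⟩ := lonely_cut_canonical hS hCU he
    exact ⟨e, he, heS, hcan⟩
  set K : Finset E := ℬ.biUnion (fun C => S ∩ C) with hK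
  have hKS : K ⊆ S := by
    intro g hg
    rw [hK, Finset.mem_biUnion] at hg
    obtain ⟨C, _, hgC⟩ := hg
    exact (Finset.mem_inter.mp hgC).1
  have hKcard : K.card = ℬ.card := by
    rw [hK, Finset.card_biUnion]
    · have : ∀ C ∈ ℬ, (S ∩ C).card = 1 := by
        intro C hC
        obtain ⟨e, he, -, -⟩ := hcanon C hC
        rw [he]; exact Finset.card_singleton e
      rw [Finset.sum_congr rfl this, Finset.sum_const, smul_eq_mul, mul_one]
    · intro C hC C' hC' hne
      obtain ⟨e, he, -, hcan⟩ := hcanon C hC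
      obtain ⟨e', he', -, hcan'⟩ := hcanon C' hC'
      rw [Function.onFun, he, he', Finset.disjoint_singleton]
      intro hee
      apply hne
      rw [hcan, hcan', ← hee]
  set F : Finset E := S \ K with hF
  have hequiv : Equivalence (fun u v : V => Relation.ReflTransGen (G.Adj (· ∈ F)) u v) :=
    ⟨fun _ => .refl, rtg_symm, Relation.ReflTransGen.trans⟩
  set st : Setoid V := ⟨fun u v => Relation.ReflTransGen (G.Adj (· ∈ F)) u v, hequiv⟩
    with hst
  set W : Finpartition (univ : Finset V) := Finpartition.ofSetoid st with hW
  have hparts : W.parts = univ.image (fun v => G.reachSet (· ∈ F) v) := by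
    rw [hW]
    show univ.image _ = univ.image _
    apply Finset.image_congr
    intro v _
    ext w
    rw [Finset.mem_filter, mem_reachSet]
    simp only [Finset.mem_univ, true_and]
    rfl
  -- lower bound on the number of parts
  have hcomp := compBound G F
  have hFcard : F.card = S.card - K.card := by rw [hF]; exact Finset.card_sdiff_of_subset hKS
  have hn := hS.2
  have hpartscard : ℬ.card + 1 ≤ W.parts.card := by
    rw [hparts]
    have h1 : K.card ≤ S.card := Finset.card_le_card hKS
    omega
  -- partition cut is inside the union of the cuts of ℬ
  have hsubcut : G.partitionCut W ⊆ ℬ.sup id := by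
    intro g hg
    rw [partitionCut, Finset.mem_filter] at hg
    obtain ⟨-, hg⟩ := hg
    have hP0 : G.reachSet (· ∈ F) (G.fst g) ∈ W.parts := by
      rw [hparts]; exact Finset.mem_image_of_mem _ (Finset.mem_univ _)
    have h1 := hg _ hP0
    have hfst : G.fst g ∈ G.reachSet (· ∈ F) (G.fst g) := mem_reachSet.mpr .refl
    have hsnd : G.snd g ∉ G.reachSet (· ∈ F) (G.fst g) := fun h => h1 ⟨hfst, h⟩
    have hnR : ¬ Relation.ReflTransGen (G.Adj (· ∈ F)) (G.fst g) (G.snd g) :=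
      fun h => hsnd (mem_reachSet.mpr h)
    by_contra hgB
    apply hnR
    rw [hF]
    apply separation hS K hKS
    intro e heK
    rw [hK, Finset.mem_biUnion] at heK
    obtain ⟨C, hCB, heC⟩ := heK
    obtain ⟨e', he', heS', hcan⟩ := hcanon C hCB
    have hee : e = e' := by
      rw [he'] at heC; exact Finset.mem_singleton.mp heC
    have hcan' : C = G.cut (G.reachSet (· ∈ S.erase e) (G.fst e)) := by
      rw [hee]; exact hcan
    have hgC : g ∉ C := fun h => hgB (Finset.mem_sup.mpr ⟨C, hCB, h⟩)
    rw [hcan', mem_cut] at hgC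
    push_neg at hgC
    constructor
    · intro h
      exact mem_reachSet.mp (hgC.1 (mem_reachSet.mpr h))
    · intro h
      by_contra h2
      exact (hgC.2 (fun hmem => h2 (mem_reachSet.mp hmem))) (mem_reachSet.mpr h)
  -- put things together via the LP partition inequality
  have hLP := hx.2.2 W
  have hsum_le : ∑ e ∈ G.partitionCut W, x e ≤ ∑ e ∈ ℬ.sup id, x e :=
    Finset.sum_le_sum_of_subset_of_nonneg hsubcut (fun e _ _ => hx.1 e)
  have hcast : (ℬ.card : ℝ) ≤ (W.parts.card : ℝ) - 1 := by
    have := (Nat.cast_le (α := ℝ)).mpr hpartscard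
    push_cast at this
    linarith
  rw [Finset.sum_const, nsmul_eq_mul, mul_one]
  linarith

/-- For every spanning tree `S` there is a function
`f : {(e,C) : e ∈ C, C ∈ ℒ_S} → ℝ≥0` with `Σ_{C ∈ ℒ_S : e ∈ C} f(e,C) ≤ x*_e` for
every edge `e` and `Σ_{e ∈ C} f(e,C) ≥ 1` for every `C ∈ ℒ_S`. -/
theorem fractional_assignment_exists (G : MultiGraph V E) (hG : G.Connected)
    (T : Finset V) (hT : Even T.card) (x : E → ℝ) (hx : G.LPFeasible T x)
    (S : Finset E) (hS : G.IsSpanningTree S) :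
    ∃ f : E → Finset E → ℝ,
      (∀ e C, 0 ≤ f e C) ∧
      (∀ e, ∑ C ∈ (G.lonelyCuts x S).filter (fun C => e ∈ C), f e C ≤ x e) ∧
      (∀ C ∈ G.lonelyCuts x S, 1 ≤ ∑ e ∈ C, f e C) := by
  obtain ⟨f, hf0, hfs, hfr, hfc⟩ := FracHallAux.frac_hall (G.lonelyCuts x S).card
    (G.lonelyCuts x S) le_rfl x (fun _ => (1:ℝ)) hx.1 (hall_lonely G hx hS)
  refine ⟨f, hf0, ?_, ?_⟩
  · intro e
    calc ∑ C ∈ (G.lonelyCuts x S).filter (fun C => e ∈ C), f e C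
        ≤ ∑ C ∈ (univ : Finset (Finset E)), f e C :=
          Finset.sum_le_sum_of_subset_of_nonneg (Finset.subset_univ _)
            (fun C _ _ => hf0 e C)
      _ ≤ x e := hfr e
  · intro C hC
    exact hfc C hC

end MultiGraph
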